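/- Let S ∈ ℝ^{n×n} be skew-symmetric (Sᵀ = −S), let μ_max be the maximum of the absolute values of the (complex) eigenvalues of S, and let ω > 0. Then the spectral norm of ωI − S equals √(ω² + μ_max²), i.e., ‖ωI − S‖ = √(ω² + μ_max²). -/

import Mathlib

open Matrix Filter

/-- Componentwise absolute value of a vector in Euclidean space. -/
noncomputable def vabs {n : ℕ} (x : EuclideanSpace ℝ (Fin n)) : EuclideanSpace ℝ (Fin n) :=
  WithLp.toLp 2 (fun i => |x i|)

/-- A matrix acting on Euclidean space (so that vector norms are the Euclidean 2-norm). -/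
noncomputable def mulV {n : ℕ} (M : Matrix (Fin n) (Fin n) ℝ) (x : EuclideanSpace ℝ (Fin n)) :
    EuclideanSpace ℝ (Fin n) :=
  Matrix.toEuclideanCLM (𝕜 := ℝ) M x

/-- Spectral norm of a real matrix: the operator norm induced by the Euclidean vector norm. -/
noncomputable def spec {n : ℕ} (M : Matrix (Fin n) (Fin n) ℝ) : ℝ :=
  ‖Matrix.toEuclideanCLM (𝕜 := ℝ) M‖

/-- The GAVE residual function `F(x) = A x − B |x| − b`. -/
noncomputable def gaveF {n : ℕ} (A B : Matrix (Fin n) (Fin n) ℝ)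
    (b : EuclideanSpace ℝ (Fin n)) (x : EuclideanSpace ℝ (Fin n)) : EuclideanSpace ℝ (Fin n) :=
  mulV A x - mulV B (vabs x) - b

/-- The AVE residual function `A x − |x| − b` (the GAVE with `B = I`). -/
noncomputable def aveF {n : ℕ} (A : Matrix (Fin n) (Fin n) ℝ)
    (b : EuclideanSpace ℝ (Fin n)) (x : EuclideanSpace ℝ (Fin n)) : EuclideanSpace ℝ (Fin n) :=
  mulV A x - vabs x - b

/-- A sequence converges linearly to `xs`: the distances to `xs` contract by a fixed
factor `c < 1` at every step, and the sequence tends to `xs`. -/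
def ConvergesLinearlyTo {n : ℕ} (x : ℕ → EuclideanSpace ℝ (Fin n))
    (xs : EuclideanSpace ℝ (Fin n)) : Prop :=
  (∃ c : ℝ, 0 ≤ c ∧ c < 1 ∧ ∀ k : ℕ, ‖x (k + 1) - xs‖ ≤ c * ‖x k - xs‖) ∧
    Tendsto x atTop (nhds xs)

open Matrix

noncomputable def rePart {n : ℕ} (z : EuclideanSpace ℂ (Fin n)) : EuclideanSpace ℝ (Fin n) :=
  WithLp.toLp 2 (fun i => (z i).re)

noncomputable def imPart {n : ℕ} (z : EuclideanSpace ℂ (Fin n)) : EuclideanSpace ℝ (Fin n) :=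
  WithLp.toLp 2 (fun i => (z i).im)

lemma clm_apply_coord {n : ℕ} {𝕜 : Type*} [RCLike 𝕜] (M : Matrix (Fin n) (Fin n) 𝕜)
    (x : EuclideanSpace 𝕜 (Fin n)) (i : Fin n) :
    (Matrix.toEuclideanCLM (𝕜 := 𝕜) M x) i = ∑ j, M i j * x j := by
  have h := Matrix.ofLp_toEuclideanCLM (𝕜 := 𝕜) M x
  have := congrFun h i
  simpa [Matrix.toLin'_apply, Matrix.mulVec, dotProduct] using this

lemma euclid_norm_sq {n : ℕ} {𝕜 : Type*} [RCLike 𝕜] (x : EuclideanSpace 𝕜 (Fin n)) :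
    ‖x‖ ^ 2 = ∑ i, ‖x i‖ ^ 2 := by
  rw [EuclideanSpace.norm_eq, Real.sq_sqrt]
  positivity

lemma complexified_apply_normsq {n : ℕ} (M : Matrix (Fin n) (Fin n) ℝ)
    (z : EuclideanSpace ℂ (Fin n)) :
    ‖Matrix.toEuclideanCLM (𝕜 := ℂ) (M.map ((↑) : ℝ → ℂ)) z‖ ^ 2 =
      ‖Matrix.toEuclideanCLM (𝕜 := ℝ) M (rePart z)‖ ^ 2 +
      ‖Matrix.toEuclideanCLM (𝕜 := ℝ) M (imPart z)‖ ^ 2 := by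
  simp only [euclid_norm_sq]
  rw [← Finset.sum_add_distrib]
  refine Finset.sum_congr rfl fun i _ => ?_
  rw [clm_apply_coord, clm_apply_coord, clm_apply_coord]
  have hre : (∑ j, (M.map ((↑) : ℝ → ℂ)) i j * z j).re = ∑ j, M i j * (rePart z) j := by
    rw [Complex.re_sum]
    exact Finset.sum_congr rfl fun j _ => by simp [Matrix.map_apply, Complex.mul_re, rePart]
  have him : (∑ j, (M.map ((↑) : ℝ → ℂ)) i j * z j).im = ∑ j, M i j * (imPart z) j := by
    rw [Complex.im_sum]
    exact Finset.sum_congr rfl fun j _ => by simp [Matrix.map_apply, Complex.mul_im, imPart]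
  rw [Complex.sq_norm, Complex.normSq_apply, hre, him]
  simp only [Real.norm_eq_abs, sq_abs]
  ring

lemma euclid_norm_sq_split {n : ℕ} (z : EuclideanSpace ℂ (Fin n)) :
    ‖z‖ ^ 2 = ‖rePart z‖ ^ 2 + ‖imPart z‖ ^ 2 := by
  simp only [euclid_norm_sq]
  rw [← Finset.sum_add_distrib]
  refine Finset.sum_congr rfl fun i _ => ?_
  rw [Complex.sq_norm, Complex.normSq_apply]
  simp only [Real.norm_eq_abs, sq_abs, rePart, imPart]
  ring

lemma norm_complexified {n : ℕ} (M : Matrix (Fin n) (Fin n) ℝ) :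
    ‖Matrix.toEuclideanCLM (𝕜 := ℂ) (M.map ((↑) : ℝ → ℂ))‖ =
      ‖Matrix.toEuclideanCLM (𝕜 := ℝ) M‖ := by
  apply le_antisymm
  · refine ContinuousLinearMap.opNorm_le_bound _ (norm_nonneg _) fun z => ?_
    have h1 : ‖Matrix.toEuclideanCLM (𝕜 := ℂ) (M.map ((↑) : ℝ → ℂ)) z‖ ^ 2 ≤
        (‖Matrix.toEuclideanCLM (𝕜 := ℝ) M‖ * ‖z‖) ^ 2 := by
      rw [complexified_apply_normsq]
      have h2 := pow_le_pow_left₀ (norm_nonneg _)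
        ((Matrix.toEuclideanCLM (𝕜 := ℝ) M).le_opNorm (rePart z)) 2
      have h3 := pow_le_pow_left₀ (norm_nonneg _)
        ((Matrix.toEuclideanCLM (𝕜 := ℝ) M).le_opNorm (imPart z)) 2
      have h4 := euclid_norm_sq_split z
      calc _ ≤ (‖Matrix.toEuclideanCLM (𝕜 := ℝ) M‖ * ‖rePart z‖) ^ 2 +
            (‖Matrix.toEuclideanCLM (𝕜 := ℝ) M‖ * ‖imPart z‖) ^ 2 := add_le_add h2 h3
        _ = (‖Matrix.toEuclideanCLM (𝕜 := ℝ) M‖ * ‖z‖) ^ 2 := by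
            rw [mul_pow, mul_pow, ← mul_add, ← h4, mul_pow]
    calc ‖Matrix.toEuclideanCLM (𝕜 := ℂ) (M.map ((↑) : ℝ → ℂ)) z‖
        = Real.sqrt (‖Matrix.toEuclideanCLM (𝕜 := ℂ) (M.map ((↑) : ℝ → ℂ)) z‖ ^ 2) :=
          (Real.sqrt_sq (norm_nonneg _)).symm
      _ ≤ Real.sqrt ((‖Matrix.toEuclideanCLM (𝕜 := ℝ) M‖ * ‖z‖) ^ 2) := Real.sqrt_le_sqrt h1
      _ = ‖Matrix.toEuclideanCLM (𝕜 := ℝ) M‖ * ‖z‖ := Real.sqrt_sq (by positivity)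
  · refine ContinuousLinearMap.opNorm_le_bound _ (norm_nonneg _) fun x => ?_
    set z : EuclideanSpace ℂ (Fin n) := WithLp.toLp 2 (fun i => ((x i : ℂ))) with hz
    have hre : rePart z = x := by ext i; simp [hz, rePart]
    have him : imPart z = (0 : EuclideanSpace ℝ (Fin n)) := by ext i; simp [hz, imPart]
    have h1 : ‖Matrix.toEuclideanCLM (𝕜 := ℝ) M x‖ ^ 2 =
        ‖Matrix.toEuclideanCLM (𝕜 := ℂ) (M.map ((↑) : ℝ → ℂ)) z‖ ^ 2 := by
      rw [complexified_apply_normsq, hre, him, map_zero, norm_zero]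
      ring
    have h2 : ‖z‖ ^ 2 = ‖x‖ ^ 2 := by
      have := euclid_norm_sq_split z
      rw [hre, him, norm_zero] at this
      rw [this]; ring
    have h2' : ‖z‖ = ‖x‖ := by
      have := congrArg Real.sqrt h2
      rwa [Real.sqrt_sq (norm_nonneg _), Real.sqrt_sq (norm_nonneg _)] at this
    have h3 : ‖Matrix.toEuclideanCLM (𝕜 := ℝ) M x‖ =
        ‖Matrix.toEuclideanCLM (𝕜 := ℂ) (M.map ((↑) : ℝ → ℂ)) z‖ := by
      have := congrArg Real.sqrt h1
      rwa [Real.sqrt_sq (norm_nonneg _), Real.sqrt_sq (norm_nonneg _)] at this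
    rw [h3, ← h2']
    exact (Matrix.toEuclideanCLM (𝕜 := ℂ) (M.map ((↑) : ℝ → ℂ))).le_opNorm z
open Matrix

lemma norm_clm_eq_mumax {n : ℕ} (S : Matrix (Fin n) (Fin n) ℝ) (hskew : Sᵀ = -S)
    (mumax : ℝ)
    (hmu : IsGreatest ((fun z : ℂ => ‖z‖) ''
      spectrum ℂ (S.map ((↑) : ℝ → ℂ))) mumax) :
    ‖Matrix.toEuclideanCLM (𝕜 := ℂ) (S.map ((↑) : ℝ → ℂ))‖ = mumax := by
  set M := S.map ((↑) : ℝ → ℂ) with hM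
  have hstar : star M = -M := by
    ext i j
    have h := congrFun (congrFun hskew i) j
    simp only [Matrix.transpose_apply, Matrix.neg_apply] at h
    simp [hM, Matrix.conjTranspose_apply, Matrix.map_apply, h]
  set T := Matrix.toEuclideanCLM (𝕜 := ℂ) M with hT
  have hTstar : star T = -T := by rw [hT, ← map_star, hstar, map_neg]
  haveI : IsStarNormal T := ⟨by rw [hTstar]; exact (Commute.refl T).neg_left⟩
  have hrad : spectralRadius ℂ T = ‖T‖₊ := IsStarNormal.spectralRadius_eq_nnnorm T
  have hspec : spectrum ℂ T = spectrum ℂ M :=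
    AlgEquiv.spectrum_eq (Matrix.toEuclideanCLM (𝕜 := ℂ) (n := Fin n)) M
  obtain ⟨z0, hz0, hz0e⟩ := hmu.1
  have hmunn : 0 ≤ mumax := hz0e ▸ norm_nonneg z0
  have hsr : spectralRadius ℂ T = ENNReal.ofReal mumax := by
    rw [spectralRadius, hspec]
    apply le_antisymm
    · refine iSup₂_le fun k hk => ?_
      rw [← enorm_eq_nnnorm, ← ofReal_norm]
      exact ENNReal.ofReal_le_ofReal (hmu.2 ⟨k, hk, rfl⟩)
    · have : ENNReal.ofReal mumax = (‖z0‖₊ : ENNReal) := by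
        rw [← enorm_eq_nnnorm, ← ofReal_norm]
        exact congrArg ENNReal.ofReal hz0e.symm
      rw [this]
      exact le_iSup₂ (f := fun k (_ : k ∈ spectrum ℂ M) => (‖k‖₊ : ENNReal)) z0 hz0
  rw [hrad] at hsr
  have := congrArg ENNReal.toReal hsr
  rwa [ENNReal.coe_toReal, coe_nnnorm, ENNReal.toReal_ofReal hmunn] at this
section AuxLemmas

open scoped RealInnerProductSpace

lemma real_conjTranspose_eq_transpose {n : ℕ} (S : Matrix (Fin n) (Fin n) ℝ) :
    Sᴴ = Sᵀ := by
  ext i j; simp [Matrix.conjTranspose_apply]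

set_option maxHeartbeats 1000000 in
theorem stmt19' {n : ℕ} (S : Matrix (Fin n) (Fin n) ℝ) (hskew : Sᵀ = -S)
    (mumax : ℝ)
    (hmu : IsGreatest ((fun z : ℂ => ‖z‖) ''
      spectrum ℂ (S.map ((↑) : ℝ → ℂ))) mumax)
    (ω : ℝ) (hω : 0 < ω) :
    ‖Matrix.toEuclideanCLM (𝕜 := ℝ) (ω • (1 : Matrix (Fin n) (Fin n) ℝ) - S)‖ =
      Real.sqrt (ω ^ 2 + mumax ^ 2) := by
  classical
  have hn : 0 < n := by
    rcases Nat.eq_zero_or_pos n with h0 | h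
    · subst h0
      obtain ⟨z, hz, -⟩ := hmu.1
      rw [spectrum.mem_iff] at hz
      haveI : Subsingleton (Matrix (Fin 0) (Fin 0) ℂ) := ⟨fun a b => by ext i j; exact i.elim0⟩
      exact (hz (isUnit_of_subsingleton _)).elim
    · exact h
  set L := Matrix.toEuclideanCLM (𝕜 := ℝ) S with hL
  set A := Matrix.toEuclideanCLM (𝕜 := ℝ) (ω • (1 : Matrix (Fin n) (Fin n) ℝ) - S) with hAdef
  have hA : A = ω • (1 : EuclideanSpace ℝ (Fin n) →L[ℝ] EuclideanSpace ℝ (Fin n)) - L := by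
    rw [hAdef, map_sub, _root_.map_smul, _root_.map_one]
  have happ : ∀ x : EuclideanSpace ℝ (Fin n), A x = ω • x - L x := by
    intro x
    rw [hA]
    simp
  have hLadj : ContinuousLinearMap.adjoint L = -L := by
    rw [← ContinuousLinearMap.star_eq_adjoint, hL, ← map_star, ← map_neg]
    congr 1
  have hinner : ∀ x : EuclideanSpace ℝ (Fin n), ⟪x, L x⟫ = 0 := by
    intro x
    have h1 : ⟪ContinuousLinearMap.adjoint L x, x⟫ = ⟪x, L x⟫ :=
      ContinuousLinearMap.adjoint_inner_left L x x
    rw [hLadj] at h1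
    simp only [ContinuousLinearMap.neg_apply, inner_neg_left] at h1
    have h2 : ⟪L x, x⟫ = ⟪x, L x⟫ := real_inner_comm _ _
    linarith [h1, h2]
  have hkey : ∀ x : EuclideanSpace ℝ (Fin n),
      ‖A x‖ ^ 2 = ω ^ 2 * ‖x‖ ^ 2 + ‖L x‖ ^ 2 := by
    intro x
    rw [happ, norm_sub_sq_real, real_inner_smul_left, hinner, norm_smul,
      Real.norm_eq_abs, mul_pow, sq_abs]
    ring
  have ha0 : 0 ≤ ‖A‖ := norm_nonneg A
  have hs0 : 0 ≤ ‖L‖ := norm_nonneg L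
  -- upper bound
  have hub : ‖A‖ ≤ Real.sqrt (ω ^ 2 + ‖L‖ ^ 2) := by
    refine ContinuousLinearMap.opNorm_le_bound _ (Real.sqrt_nonneg _) fun x => ?_
    have h1 : ‖A x‖ ^ 2 ≤ (ω ^ 2 + ‖L‖ ^ 2) * ‖x‖ ^ 2 := by
      have h2 := pow_le_pow_left₀ (norm_nonneg _) (L.le_opNorm x) 2
      rw [hkey x]
      nlinarith [norm_nonneg (L x), norm_nonneg x]
    calc ‖A x‖ = Real.sqrt (‖A x‖ ^ 2) := (Real.sqrt_sq (norm_nonneg _)).symm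
      _ ≤ Real.sqrt ((ω ^ 2 + ‖L‖ ^ 2) * ‖x‖ ^ 2) := Real.sqrt_le_sqrt h1
      _ = Real.sqrt (ω ^ 2 + ‖L‖ ^ 2) * ‖x‖ := by
          rw [Real.sqrt_mul (by positivity), Real.sqrt_sq (norm_nonneg _)]
  -- ω ≤ ‖A‖
  have hωa : ω ≤ ‖A‖ := by
    set x0 : EuclideanSpace ℝ (Fin n) := EuclideanSpace.single (⟨0, hn⟩ : Fin n) (1 : ℝ) with hx0
    have hnx0 : ‖x0‖ = 1 := by rw [hx0, EuclideanSpace.norm_single, norm_one]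
    have h1 : ω ^ 2 ≤ ‖A x0‖ ^ 2 := by
      rw [hkey x0, hnx0]
      nlinarith [norm_nonneg (L x0)]
    have h2 : ‖A x0‖ ≤ ‖A‖ := by
      calc ‖A x0‖ ≤ ‖A‖ * ‖x0‖ := A.le_opNorm x0
        _ = ‖A‖ := by rw [hnx0, mul_one]
    calc ω = Real.sqrt (ω ^ 2) := (Real.sqrt_sq hω.le).symm
      _ ≤ Real.sqrt (‖A x0‖ ^ 2) := Real.sqrt_le_sqrt h1
      _ = ‖A x0‖ := Real.sqrt_sq (norm_nonneg _)
      _ ≤ ‖A‖ := h2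
  -- lower bound on ‖A‖ via ‖L‖
  have hlb : ‖L‖ ≤ Real.sqrt (‖A‖ ^ 2 - ω ^ 2) := by
    refine ContinuousLinearMap.opNorm_le_bound _ (Real.sqrt_nonneg _) fun x => ?_
    have h1 : ‖L x‖ ^ 2 ≤ (‖A‖ ^ 2 - ω ^ 2) * ‖x‖ ^ 2 := by
      have h2 := pow_le_pow_left₀ (norm_nonneg _) (A.le_opNorm x) 2
      have h3 := hkey x
      nlinarith [norm_nonneg (A x), norm_nonneg x]
    calc ‖L x‖ = Real.sqrt (‖L x‖ ^ 2) := (Real.sqrt_sq (norm_nonneg _)).symm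
      _ ≤ Real.sqrt ((‖A‖ ^ 2 - ω ^ 2) * ‖x‖ ^ 2) := Real.sqrt_le_sqrt h1
      _ = Real.sqrt (‖A‖ ^ 2 - ω ^ 2) * ‖x‖ := by
          rw [Real.sqrt_mul (by nlinarith), Real.sqrt_sq (norm_nonneg _)]
  -- a² = ω² + s²
  have hsq : ‖A‖ ^ 2 = ω ^ 2 + ‖L‖ ^ 2 := by
    have h1 : ‖A‖ ^ 2 ≤ ω ^ 2 + ‖L‖ ^ 2 := by
      have := pow_le_pow_left₀ ha0 hub 2
      rwa [Real.sq_sqrt (by positivity)] at this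
    have h2 : ‖L‖ ^ 2 ≤ ‖A‖ ^ 2 - ω ^ 2 := by
      have := pow_le_pow_left₀ hs0 hlb 2
      rwa [Real.sq_sqrt (by nlinarith)] at this
    linarith
  -- ‖L‖ = mumax
  have hLmu : ‖L‖ = mumax := by
    rw [hL, ← norm_complexified]
    exact norm_clm_eq_mumax S hskew mumax hmu
  rw [← hLmu]
  calc ‖A‖ = Real.sqrt (‖A‖ ^ 2) := (Real.sqrt_sq ha0).symm
    _ = Real.sqrt (ω ^ 2 + ‖L‖ ^ 2) := by rw [hsq]

end AuxLemmas


theorem stmt19 {n : ℕ} (S : Matrix (Fin n) (Fin n) ℝ) (hskew : Sᵀ = -S)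
    (mumax : ℝ)
    (hmu : IsGreatest ((fun z : ℂ => ‖z‖) ''
      spectrum ℂ (S.map ((↑) : ℝ → ℂ))) mumax)
    (ω : ℝ) (hω : 0 < ω) :
    spec (ω • (1 : Matrix (Fin n) (Fin n) ℝ) - S) = Real.sqrt (ω ^ 2 + mumax ^ 2) := by
  unfold spec
  exact stmt19' S hskew mumax hmu ω hω
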